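/- Let (a_j)_{j≥1} be a positive non-decreasing sequence of reals and let m ≤ n be positive integers. Then (a_{n+1} + ⋯ + a_{n+m}) / (a_1 + ⋯ + a_n) ≥ (min over j ≤ n of a_{j+m}/a_j) · (m/n). -/
import Mathlib


/-- For a positive non-decreasing sequence `a` and `1 ≤ m ≤ n`,
`(a_{n+1}+⋯+a_{n+m})/(a_1+⋯+a_n) ≥ (min_{1≤j≤n} a_{j+m}/a_j) · (m/n)`. -/
theorem stmt1 (a : ℕ → ℝ) (hpos : ∀ j, 0 < a j) (hmono : ∀ j, a j ≤ a (j + 1))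
    (m n : ℕ) (hm : 1 ≤ m) (hmn : m ≤ n) :
    (∑ j ∈ Finset.Icc (n + 1) (n + m), a j) / (∑ j ∈ Finset.Icc 1 n, a j) ≥
      ((Finset.Icc 1 n).inf' ⟨1, Finset.mem_Icc.mpr ⟨le_refl 1, hm.trans hmn⟩⟩
          (fun j => a (j + m) / a j)) * ((m : ℝ) / (n : ℝ)) := by
  have hmono' : Monotone a := monotone_nat_of_le_succ hmono
  have hn : 0 < n := hm.trans hmn
  have ne : (Finset.Icc 1 n).Nonempty := ⟨1, Finset.mem_Icc.mpr ⟨le_refl 1, hm.trans hmn⟩⟩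
  set c := (Finset.Icc 1 n).inf' ⟨1, Finset.mem_Icc.mpr ⟨le_refl 1, hm.trans hmn⟩⟩
      (fun j => a (j + m) / a j) with hc
  have hcle : ∀ j ∈ Finset.Icc 1 n, c ≤ a (j + m) / a j := fun j hj =>
    Finset.inf'_le _ hj
  have hc0 : 0 ≤ c :=
    Finset.le_inf' _ _ (fun j _ => div_nonneg (hpos _).le (hpos _).le)
  set k := n - m with hk
  have hkm : k + m = n := Nat.sub_add_cancel hmn
  have hS1pos : 0 < ∑ j ∈ Finset.Icc 1 n, a j :=
    Finset.sum_pos (fun j _ => hpos j) ne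
  set T := ∑ j ∈ Finset.Icc (k + 1) n, a j with hT
  -- Step 1: reindex the numerator
  have hstep1 : ∑ j ∈ Finset.Icc (k + 1) n, a (j + m) = ∑ j ∈ Finset.Icc (n + 1) (n + m), a j := by
    rw [← hkm]
    rw [show Finset.Icc (k + m + 1) (k + m + m) = (Finset.Icc (k+1) (k+m)).map
        (addRightEmbedding m) from ?_]
    · rw [Finset.sum_map]; rfl
    · rw [Finset.map_add_right_Icc]; congr 1 <;> omega
  -- Step 2: termwise bound
  have hstep2 : c * T ≤ ∑ j ∈ Finset.Icc (k + 1) n, a (j + m) := by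
    rw [hT, Finset.mul_sum]
    apply Finset.sum_le_sum
    intro j hj
    have hj' : j ∈ Finset.Icc 1 n := by
      simp only [Finset.mem_Icc] at hj ⊢; omega
    exact (le_div_iff₀ (hpos j)).mp (hcle j hj')
  -- Step 3: average of last m terms ≥ overall average
  have hR : ∑ j ∈ Finset.Icc 1 k, a j ≤ (k : ℝ) * a (k + 1) := by
    have := Finset.sum_le_card_nsmul (Finset.Icc 1 k) a (a (k + 1))
      (fun j hj => hmono' (by simp only [Finset.mem_Icc] at hj; omega))
    simpa [Nat.card_Icc, nsmul_eq_mul] using this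
  have hT2 : (m : ℝ) * a (k + 1) ≤ T := by
    have := Finset.card_nsmul_le_sum (Finset.Icc (k + 1) n) a (a (k + 1))
      (fun j hj => hmono' (by simp only [Finset.mem_Icc] at hj; omega))
    have hcard : (Finset.Icc (k + 1) n).card = m := by rw [Nat.card_Icc]; omega
    rw [hcard, nsmul_eq_mul] at this
    exact this
  have hsplit : ∑ j ∈ Finset.Icc 1 n, a j = (∑ j ∈ Finset.Icc 1 k, a j) + T := by
    rw [hT, show Finset.Icc 1 n = Finset.Ioc 0 n from rfl,
      show Finset.Icc 1 k = Finset.Ioc 0 k from rfl,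
      Finset.Icc_add_one_left_eq_Ioc k n,
      Finset.sum_Ioc_consecutive _ (Nat.zero_le k) (by omega)]
  have hstep3 : (m : ℝ) * (∑ j ∈ Finset.Icc 1 n, a j) ≤ (n : ℝ) * T := by
    have hn' : (n : ℝ) = (k : ℝ) + m := by
      rw [← hkm]; push_cast; ring
    rw [hsplit, hn']
    have hk0 : (0:ℝ) ≤ (k:ℝ) := Nat.cast_nonneg k
    have hm0 : (0:ℝ) ≤ (m:ℝ) := Nat.cast_nonneg m
    nlinarith [mul_le_mul_of_nonneg_left hR hm0, mul_le_mul_of_nonneg_left hT2 hk0]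
  -- Combine
  rw [ge_iff_le, le_div_iff₀ hS1pos]
  calc c * ((m : ℝ) / n) * (∑ j ∈ Finset.Icc 1 n, a j)
      = c * ((m : ℝ) * (∑ j ∈ Finset.Icc 1 n, a j) / n) := by ring
    _ ≤ c * T := by
        apply mul_le_mul_of_nonneg_left _ hc0
        rw [div_le_iff₀ (by exact_mod_cast hn)]
        linarith [hstep3]
    _ ≤ ∑ j ∈ Finset.Icc (k + 1) n, a (j + m) := hstep2
    _ = ∑ j ∈ Finset.Icc (n + 1) (n + m), a j := hstep1
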